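/- Let ν>0, let f:[0,ν]→ℝ be Lipschitz continuous with Lipschitz constant C_f, convex, and satisfy f(0)=0. Let A, B be non-negative self-adjoint trace-class operators on a separable Hilbert space with A+B ≤ ν·Id. Then Tr f(A+B) ≤ Tr f(A) + C_f · Tr B. -/

import Mathlib

open Real
open scoped RealInnerProductSpace

open Filter Topology

/-- Countable Jensen inequality for a convex function vanishing at 0. -/
lemma jensen_tsum_aux {ν : ℝ} {f : ℝ → ℝ} {Cf : NNReal}
    (hf0 : f 0 = 0) (hconv : ConvexOn ℝ (Set.Icc 0 ν) f)
    (hlip : LipschitzOnWith Cf f (Set.Icc 0 ν)) (hν : 0 ≤ ν)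
    (p b : ℕ → ℝ) (α : ℝ) (hp : ∀ k, 0 ≤ p k) (hp1 : HasSum p 1)
    (hb : ∀ k, b k ∈ Set.Icc 0 ν) (hα : HasSum (fun k => p k * b k) α) :
    f α ≤ ∑' k, p k * f (b k) := by
  have hterm : ∀ k, 0 ≤ p k * b k := fun k => mul_nonneg (hp k) (hb k).1
  have hα0 : 0 ≤ α := hα.nonneg hterm
  have hαν : α ≤ ν := by
    have hν' : HasSum (fun k => p k * ν) ν := by simpa using hp1.mul_right ν
    exact hasSum_le (fun k => by
      have := (hb k).2; nlinarith [hp k]) hα hν'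
  have hαmem : α ∈ Set.Icc 0 ν := ⟨hα0, hαν⟩
  -- |f x| ≤ Cf * x for x ∈ Icc 0 ν
  have habs : ∀ x ∈ Set.Icc (0:ℝ) ν, |f x| ≤ (Cf : ℝ) * x := by
    intro x hx
    have := hlip.dist_le_mul x hx 0 ⟨le_refl _, hν⟩
    rw [Real.dist_eq, Real.dist_eq, hf0, sub_zero, sub_zero, abs_of_nonneg hx.1] at this
    exact this
  have hsum : Summable fun k => p k * f (b k) := by
    apply Summable.of_norm_bounded (g := fun k => (Cf : ℝ) * (p k * b k))
      ((hα.summable).mul_left _)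
    intro k
    rw [Real.norm_eq_abs, abs_mul, abs_of_nonneg (hp k)]
    calc p k * |f (b k)| ≤ p k * ((Cf : ℝ) * b k) := by
          exact mul_le_mul_of_nonneg_left (habs _ (hb k)) (hp k)
      _ = (Cf : ℝ) * (p k * b k) := by ring
  -- finite Jensen
  have hfin : ∀ n, f (∑ k ∈ Finset.range n, p k * b k)
      ≤ ∑ k ∈ Finset.range n, p k * f (b k) := by
    intro n
    set t := ∑ k ∈ Finset.range n, p k with ht
    have ht1 : t ≤ 1 := sum_le_hasSum _ (fun k _ => hp k) hp1
    set w : ℕ → ℝ := fun k => if k = n then 1 - t else p k with hw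
    set x : ℕ → ℝ := fun k => if k = n then 0 else b k with hx
    have hw0 : ∀ k ∈ Finset.range (n+1), 0 ≤ w k := by
      intro k _
      by_cases hk : k = n <;> simp [hw, hk, sub_nonneg.mpr ht1, hp k]
    have hw1 : ∑ k ∈ Finset.range (n+1), w k = 1 := by
      rw [Finset.sum_range_succ]
      have : ∑ k ∈ Finset.range n, w k = t := by
        apply Finset.sum_congr rfl
        intro k hk
        have : k ≠ n := (Finset.mem_range.mp hk).ne
        simp [hw, this]
      rw [this]; simp [hw]
    have hxmem : ∀ k ∈ Finset.range (n+1), x k ∈ Set.Icc (0:ℝ) ν := by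
      intro k _
      by_cases hk : k = n <;> simp [hx, hk, hν, hb k, le_refl]
    have := hconv.map_sum_le hw0 hw1 hxmem
    have hL : ∑ k ∈ Finset.range (n+1), w k • x k = ∑ k ∈ Finset.range n, p k * b k := by
      have h1 : ∑ k ∈ Finset.range n, w k • x k = ∑ k ∈ Finset.range n, p k * b k := by
        apply Finset.sum_congr rfl
        intro k hk
        have : k ≠ n := (Finset.mem_range.mp hk).ne
        simp [hw, hx, this]
      rw [Finset.sum_range_succ, h1]
      simp [hx]
    have hR : ∑ k ∈ Finset.range (n+1), w k • f (x k) = ∑ k ∈ Finset.range n, p k * f (b k) := by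
      have h1 : ∑ k ∈ Finset.range n, w k • f (x k) = ∑ k ∈ Finset.range n, p k * f (b k) := by
        apply Finset.sum_congr rfl
        intro k hk
        have : k ≠ n := (Finset.mem_range.mp hk).ne
        simp [hw, hx, this]
      rw [Finset.sum_range_succ, h1]
      simp [hx, hf0]
    rw [hL, hR] at this
    exact this
  -- limit
  have hsmem : ∀ n, (∑ k ∈ Finset.range n, p k * b k) ∈ Set.Icc (0:ℝ) ν := by
    intro n
    constructor
    · exact Finset.sum_nonneg fun k _ => hterm k
    · exact le_trans (sum_le_hasSum _ (fun k _ => hterm k) hα) hαν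
  have hc : ContinuousWithinAt f (Set.Icc 0 ν) α := hlip.continuousOn α hαmem
  have hL : Tendsto (fun n => f (∑ k ∈ Finset.range n, p k * b k)) atTop (𝓝 (f α)) := by
    apply hc.tendsto.comp
    rw [tendsto_nhdsWithin_iff]
    exact ⟨hα.tendsto_sum_nat, Filter.Eventually.of_forall hsmem⟩
  have hR : Tendsto (fun n => ∑ k ∈ Finset.range n, p k * f (b k)) atTop
      (𝓝 (∑' k, p k * f (b k))) := hsum.hasSum.tendsto_sum_nat
  exact le_of_tendsto_of_tendsto' hL hR hfin

/-- **Lemma 7.3.** Let `f : [0,ν] → ℝ` be Lipschitz (with constant `Cf`), convex,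
with `f 0 = 0`. Let `A, B` be non-negative self-adjoint trace-class operators on a
separable Hilbert space with `A + B ≤ ν·Id`. Then `Tr f(A+B) ≤ Tr f(A) + Cf · Tr B`.
The traces of `f(A+B)` and `f(A)` are expressed via orthonormal eigenbases `g`, `h`
of the trace-class operators `A+B` and `A` with eigenvalue sequences `μ` and `a`,
and `Tr B` via the basis `g`. -/
theorem pekar_stmt0 {E : Type*} [NormedAddCommGroup E] [InnerProductSpace ℝ E]
    [CompleteSpace E]
    (ν : ℝ) (hν : 0 < ν) (f : ℝ → ℝ) (Cf : NNReal)
    (hf0 : f 0 = 0)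
    (hconv : ConvexOn ℝ (Set.Icc 0 ν) f)
    (hlip : LipschitzOnWith Cf f (Set.Icc 0 ν))
    (A B : E →L[ℝ] E)
    (hA : IsSelfAdjoint A) (hB : IsSelfAdjoint B)
    (hApos : ∀ x : E, 0 ≤ ⟪x, A x⟫) (hBpos : ∀ x : E, 0 ≤ ⟪x, B x⟫)
    (hbound : ∀ x : E, ⟪x, (A + B) x⟫ ≤ ν * ‖x‖ ^ 2)
    (g : HilbertBasis ℕ ℝ E) (μ : ℕ → ℝ)
    (hg : ∀ j, (A + B) (g j) = μ j • (g j : E))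
    (h : HilbertBasis ℕ ℝ E) (a : ℕ → ℝ)
    (hh : ∀ j, A (h j) = a j • (h j : E))
    (htrAB : Summable μ) (htrA : Summable a)
    (htrB : Summable fun j => ⟪(g j : E), B (g j)⟫) :
    ∑' j, f (μ j) ≤ ∑' j, f (a j) + Cf * ∑' j, ⟪(g j : E), B (g j)⟫ := by
  have hAsym : ∀ x y : E, ⟪A x, y⟫ = ⟪x, A y⟫ := fun x y => hA.isSymmetric x y
  have hgn : ∀ j, ⟪(g j : E), (g j : E)⟫ = 1 := by
    intro j
    rw [real_inner_self_eq_norm_sq, g.orthonormal.1 j]; norm_num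
  have hhn : ∀ k, ⟪(h k : E), (h k : E)⟫ = 1 := by
    intro k
    rw [real_inner_self_eq_norm_sq, h.orthonormal.1 k]; norm_num
  set β : ℕ → ℝ := fun j => ⟪(g j : E), B (g j)⟫ with hβ
  -- μ j = ⟪g j, A g j⟫ + β j
  have hμeq : ∀ j, μ j = ⟪(g j : E), A (g j)⟫ + β j := by
    intro j
    have h1 : ⟪(g j : E), (A + B) (g j)⟫ = μ j := by
      rw [hg j, inner_smul_right, hgn j, mul_one]
    rw [ContinuousLinearMap.add_apply, inner_add_right] at h1
    rw [← h1]
  have haeq : ∀ k, a k = ⟪(h k : E), A (h k)⟫ := by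
    intro k
    rw [hh k, inner_smul_right, hhn k, mul_one]
  have hβ0 : ∀ j, 0 ≤ β j := fun j => hBpos _
  have hα0 : ∀ j, 0 ≤ μ j - β j := by
    intro j
    have := hApos (g j); rw [hμeq j]; linarith
  have hμν : ∀ j, μ j ≤ ν := by
    intro j
    have h1 : ⟪(g j : E), (A + B) (g j)⟫ = μ j := by
      rw [hg j, inner_smul_right, hgn j, mul_one]
    have h2 := hbound (g j)
    rw [h1, g.orthonormal.1 j] at h2; simpa using h2
  have hμmem : ∀ j, μ j ∈ Set.Icc (0:ℝ) ν := fun j =>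
    ⟨le_trans (hα0 j) (by linarith [hβ0 j]), hμν j⟩
  have hαmem : ∀ j, μ j - β j ∈ Set.Icc (0:ℝ) ν := fun j =>
    ⟨hα0 j, by linarith [hμν j, hβ0 j]⟩
  have hamem : ∀ k, a k ∈ Set.Icc (0:ℝ) ν := by
    intro k
    constructor
    · rw [haeq k]; exact hApos _
    · have h2 := hbound (h k)
      rw [h.orthonormal.1 k] at h2
      have h3 := hBpos (h k)
      rw [ContinuousLinearMap.add_apply, inner_add_right] at h2
      rw [haeq k]; simpa using by linarith [h2, h3]
  -- p j k
  set p : ℕ → ℕ → ℝ := fun j k => ⟪(g j : E), (h k : E)⟫ ^ 2 with hp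
  have hp0 : ∀ j k, 0 ≤ p j k := fun j k => sq_nonneg _
  have hp1 : ∀ j, HasSum (fun k => p j k) 1 := by
    intro j
    have := h.hasSum_inner_mul_inner (g j : E) (g j : E)
    rw [hgn j] at this
    convert this using 2 with k
    · rfl
    simp only [hp]
    have hs : ⟪(g j : E), (h k : E)⟫ = ⟪(h k : E), (g j : E)⟫ := real_inner_comm _ _
    rw [hs]; ring
  have hq1 : ∀ k, HasSum (fun j => p j k) 1 := by
    intro k
    have := g.hasSum_inner_mul_inner (h k : E) (h k : E)
    rw [hhn k] at this
    convert this using 2 with j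
    · rfl
    simp only [hp]
    have hs : ⟪(h k : E), (g j : E)⟫ = ⟪(g j : E), (h k : E)⟫ := real_inner_comm _ _
    rw [hs]; ring
  have hpa : ∀ j, HasSum (fun k => p j k * a k) (μ j - β j) := by
    intro j
    have h1 := h.hasSum_inner_mul_inner (g j : E) (A (g j))
    have h2 : ⟪(g j : E), A (g j)⟫ = μ j - β j := by rw [hμeq j]; ring
    rw [h2] at h1
    convert h1 using 2 with k
    · rfl
    have h3 : ⟪(h k : E), A (g j)⟫ = a k * ⟪(h k : E), (g j : E)⟫ := by
      rw [← hAsym, hh k, inner_smul_left]; simp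
    rw [h3]
    simp only [hp]
    have hs : ⟪(g j : E), (h k : E)⟫ = ⟪(h k : E), (g j : E)⟫ := real_inner_comm _ _
    rw [hs]; ring
  -- Jensen per j
  have hjensen : ∀ j, f (μ j - β j) ≤ ∑' k, p j k * f (a k) := fun j =>
    jensen_tsum_aux hf0 hconv hlip hν.le (p j) a (μ j - β j) (hp0 j) (hp1 j) hamem (hpa j)
  -- Lipschitz per j
  have hlipj : ∀ j, f (μ j) ≤ f (μ j - β j) + Cf * β j := by
    intro j
    have := hlip.dist_le_mul (μ j) (hμmem j) (μ j - β j) (hαmem j)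
    rw [Real.dist_eq, Real.dist_eq] at this
    have h2 : |μ j - (μ j - β j)| = β j := by rw [abs_of_nonneg (by linarith [hβ0 j])]; ring
    rw [h2] at this
    have := abs_le.mp this
    linarith [this.2]
  -- |f x| ≤ Cf x bound
  have habs : ∀ x ∈ Set.Icc (0:ℝ) ν, |f x| ≤ (Cf : ℝ) * x := by
    intro x hx
    have := hlip.dist_le_mul x hx 0 ⟨le_refl _, hν.le⟩
    rw [Real.dist_eq, Real.dist_eq, hf0, sub_zero, sub_zero, abs_of_nonneg hx.1] at this
    exact this
  -- summabilities
  have hSα : Summable (fun j => μ j - β j) := htrAB.sub htrB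
  have hSfμ : Summable (fun j => f (μ j)) := by
    apply Summable.of_norm_bounded (g := fun j => (Cf : ℝ) * μ j) (htrAB.mul_left _)
    intro j; exact habs _ (hμmem j)
  have hSfα : Summable (fun j => f (μ j - β j)) := by
    apply Summable.of_norm_bounded (g := fun j => (Cf : ℝ) * (μ j - β j)) (hSα.mul_left _)
    intro j; exact habs _ (hαmem j)
  set G : ℕ × ℕ → ℝ := fun q => p q.1 q.2 * a q.2 with hG
  have hG0 : ∀ q, 0 ≤ G q := fun q => mul_nonneg (hp0 _ _) (hamem _).1
  have hSG : Summable G := by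
    rw [summable_prod_of_nonneg hG0]
    refine ⟨fun j => (hpa j).summable, ?_⟩
    apply hSα.congr
    intro j
    exact ((hpa j).tsum_eq).symm
  set F : ℕ × ℕ → ℝ := fun q => p q.1 q.2 * f (a q.2) with hF
  have hSF : Summable F := by
    apply Summable.of_norm_bounded (g := fun q => (Cf : ℝ) * G q) (hSG.mul_left _)
    intro q
    rw [Real.norm_eq_abs, abs_mul, abs_of_nonneg (hp0 _ _)]
    calc p q.1 q.2 * |f (a q.2)| ≤ p q.1 q.2 * ((Cf : ℝ) * a q.2) :=
          mul_le_mul_of_nonneg_left (habs _ (hamem _)) (hp0 _ _)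
      _ = (Cf : ℝ) * G q := by rw [hG]; ring
  have hSinner : Summable fun j => ∑' k, p j k * f (a k) := hSF.prod
  -- Fubini
  have hfub : ∑' j, ∑' k, p j k * f (a k) = ∑' k, f (a k) := by
    have hcomm := Summable.tsum_comm (f := fun j k => p j k * f (a k)) hSF
    rw [← hcomm]
    congr 1
    funext k
    rw [tsum_mul_right, (hq1 k).tsum_eq, one_mul]
  have hSfa : Summable fun k => f (a k) := by
    apply Summable.of_norm_bounded (g := fun k => (Cf : ℝ) * a k) (htrA.mul_left _)
    intro k; exact habs _ (hamem k)
  -- chain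
  calc ∑' j, f (μ j)
      ≤ ∑' j, (f (μ j - β j) + (Cf : ℝ) * β j) :=
        Summable.tsum_le_tsum hlipj hSfμ (hSfα.add (htrB.mul_left _))
    _ = ∑' j, f (μ j - β j) + (Cf : ℝ) * ∑' j, β j := by
        rw [Summable.tsum_add hSfα (htrB.mul_left _), tsum_mul_left]
    _ ≤ ∑' j, ∑' k, p j k * f (a k) + (Cf : ℝ) * ∑' j, β j := by
        gcongr
        exact hjensen _
    _ = ∑' k, f (a k) + (Cf : ℝ) * ∑' j, β j := by rw [hfub]
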